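/- Let A be a finitely generated monoid. The Hall algebra H_A — the ℚ-vector space of finitely supported functions on isomorphism classes of finite A-modules, with convolution product (f ⋆ g)(M) = Σ_{N ⊆ M} f(M/N) g(N), coproduct Δ(f)(M, N) = f(M ⊕ N), and grading by dimension — is a graded, connected, co-commutative bialgebra. -/

import Mathlib

universe u v

/-- A module over a monoid-with-zero `A` on a pointed set ("vector space over 𝔽₁"):
a pointed set `(M, 0)` with an action of `A` satisfying `1•m = m`, `(a*b)•m = a•(b•m)`,
`0•m = 0` and `a•0 = 0`. -/
structure FModule (A : Type v) [MonoidWithZero A] : Type (max (u + 1) v) where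
  carrier : Type u
  zero : carrier
  smul : A → carrier → carrier
  one_smul : ∀ m, smul 1 m = m
  mul_smul : ∀ a b m, smul (a * b) m = smul a (smul b m)
  zero_smul : ∀ m, smul 0 m = zero
  smul_zero : ∀ a, smul a zero = zero

namespace FModule

variable {A : Type v} [MonoidWithZero A]

/-- `N` is an `A`-submodule of `M` : a subset containing the basepoint and closed under
the action of `A`. -/
def IsSubmod (M : FModule A) (N : Set M.carrier) : Prop :=
  M.zero ∈ N ∧ ∀ (a : A), ∀ m ∈ N, M.smul a m ∈ N

/-- The submodule `N ⊆ M` as an `A`-module in its own right. -/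
def sub (M : FModule A) (N : Set M.carrier) (h : M.IsSubmod N) : FModule A where
  carrier := N
  zero := ⟨M.zero, h.1⟩
  smul a m := ⟨M.smul a m.1, h.2 a m.1 m.2⟩
  one_smul m := Subtype.ext (M.one_smul m.1)
  mul_smul a b m := Subtype.ext (M.mul_smul a b m.1)
  zero_smul m := Subtype.ext (M.zero_smul m.1)
  smul_zero a := Subtype.ext (M.smul_zero a)

open Classical in
/-- The quotient `M/N` of `M` by a submodule `N`: the pointed set `(M ∖ N) ∪ {0}`
with the induced `A`-action. -/
noncomputable def quot (M : FModule A) (N : Set M.carrier) (h : M.IsSubmod N) :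
    FModule A where
  carrier := {x : M.carrier // x = M.zero ∨ x ∉ N}
  zero := ⟨M.zero, Or.inl rfl⟩
  smul a m := if hmem : M.smul a m.1 ∈ N then ⟨M.zero, Or.inl rfl⟩
    else ⟨M.smul a m.1, Or.inr hmem⟩
  one_smul := by
    classical
    rintro ⟨x, hx⟩
    by_cases hmem : M.smul 1 x ∈ N
    · have hxN : x ∈ N := by rwa [M.one_smul] at hmem
      have hx0 : x = M.zero := hx.resolve_right fun hc => hc hxN
      simp only [dif_pos hmem]
      exact Subtype.ext hx0.symm
    · simp only [dif_neg hmem]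
      exact Subtype.ext (M.one_smul x)
  mul_smul := by
    classical
    rintro a b ⟨x, hx⟩
    by_cases hb : M.smul b x ∈ N
    · have hab : M.smul (a * b) x ∈ N := by
        rw [M.mul_smul]; exact h.2 a _ hb
      have h0 : M.smul a M.zero ∈ N := by
        rw [M.smul_zero]; exact h.1
      simp only [dif_pos hb, dif_pos hab, dif_pos h0]
    · by_cases hab : M.smul a (M.smul b x) ∈ N
      · have hab' : M.smul (a * b) x ∈ N := by rw [M.mul_smul]; exact hab
        simp only [dif_pos hab', dif_neg hb, dif_pos hab]
      · have hab' : M.smul (a * b) x ∉ N := by rw [M.mul_smul]; exact hab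
        simp only [dif_neg hab', dif_neg hb, dif_neg hab]
        exact Subtype.ext (M.mul_smul a b x)
  zero_smul := by
    classical
    rintro ⟨x, hx⟩
    have h0 : M.smul 0 x ∈ N := by rw [M.zero_smul]; exact h.1
    simp only [dif_pos h0]
  smul_zero := by
    classical
    intro a
    have h0 : M.smul a M.zero ∈ N := by rw [M.smul_zero]; exact h.1
    simp only [dif_pos h0]

/-- A morphism of `A`-modules: a pointed map compatible with the `A`-action. -/
structure Hom (M N : FModule A) where
  toFun : M.carrier → N.carrier
  map_zero : toFun M.zero = N.zero
  map_smul : ∀ a m, toFun (M.smul a m) = N.smul a (toFun m)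

/-- A morphism is normal if every fibre other than the fibre of the basepoint has at
most one element. -/
def Hom.Normal {M N : FModule A} (f : Hom M N) : Prop :=
  ∀ m m', f.toFun m = f.toFun m' → f.toFun m ≠ N.zero → m = m'

/-- Composition of morphisms. -/
def Hom.comp {M N L : FModule A} (g : Hom N L) (f : Hom M N) : Hom M L where
  toFun := g.toFun ∘ f.toFun
  map_zero := by
    show g.toFun (f.toFun M.zero) = L.zero
    rw [f.map_zero, g.map_zero]
  map_smul a m := by
    show g.toFun (f.toFun (M.smul a m)) = L.smul a (g.toFun (f.toFun m))
    rw [f.map_smul, g.map_smul]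

/-- An isomorphism of `A`-modules. -/
structure Iso (M N : FModule A) where
  toEquiv : M.carrier ≃ N.carrier
  map_zero : toEquiv M.zero = N.zero
  map_smul : ∀ a m, toEquiv (M.smul a m) = N.smul a (toEquiv m)

def Iso.refl (M : FModule A) : Iso M M := ⟨Equiv.refl _, rfl, fun _ _ => rfl⟩

def Iso.symm {M N : FModule A} (e : Iso M N) : Iso N M where
  toEquiv := e.toEquiv.symm
  map_zero := by rw [Equiv.symm_apply_eq, e.map_zero]
  map_smul a m := by
    apply e.toEquiv.injective
    rw [e.map_smul, Equiv.apply_symm_apply, Equiv.apply_symm_apply]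

def Iso.trans {M N L : FModule A} (e : Iso M N) (f : Iso N L) : Iso M L where
  toEquiv := e.toEquiv.trans f.toEquiv
  map_zero := by
    simp only [Equiv.trans_apply, e.map_zero, f.map_zero]
  map_smul a m := by
    simp only [Equiv.trans_apply, e.map_smul, f.map_smul]

/-- The wedge sum (direct sum, coproduct) `M ⊕ N` of two `A`-modules, realized as the
subset of `M × N` of pairs with at least one coordinate equal to the basepoint. -/
def wedge (M N : FModule A) : FModule A where
  carrier := {p : M.carrier × N.carrier // p.1 = M.zero ∨ p.2 = N.zero}
  zero := ⟨(M.zero, N.zero), Or.inl rfl⟩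
  smul a p := ⟨(M.smul a p.1.1, N.smul a p.1.2), by
    rcases p.2 with h1 | h2
    · exact Or.inl (by rw [h1, M.smul_zero])
    · exact Or.inr (by rw [h2, N.smul_zero])⟩
  one_smul p := Subtype.ext (Prod.ext (M.one_smul _) (N.one_smul _))
  mul_smul a b p := Subtype.ext (Prod.ext (M.mul_smul _ _ _) (N.mul_smul _ _ _))
  zero_smul p := Subtype.ext (Prod.ext (M.zero_smul _) (N.zero_smul _))
  smul_zero a := Subtype.ext (Prod.ext (M.smul_zero _) (N.smul_zero _))

/-- A module `M` is of type α if every `a ∈ A` acts on `M` by a normal map of pointed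
sets, i.e. `a•m₁ = a•m₂` implies `m₁ = m₂` or `a•m₁ = a•m₂ = 0`. -/
def TypeAlpha (M : FModule A) : Prop :=
  ∀ (a : A) (m₁ m₂ : M.carrier),
    M.smul a m₁ = M.smul a m₂ → m₁ = m₂ ∨ M.smul a m₁ = M.zero

/-- A module is indecomposable if it is nonzero and admits no decomposition as a wedge
sum (internally: a pair of submodules covering `M` and meeting only in `0`) with both
pieces nonzero. -/
def Indecomposable (M : FModule A) : Prop :=
  (∃ m : M.carrier, m ≠ M.zero) ∧
  ∀ P Q : Set M.carrier, M.IsSubmod P → M.IsSubmod Q → P ∪ Q = Set.univ →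
    P ∩ Q ⊆ {M.zero} → P = {M.zero} ∨ Q = {M.zero}

end FModule
namespace FModule

variable (A : Type v) [MonoidWithZero A]

/-- A finite `A`-module, bundled. -/
def FinFMod := {M : FModule.{0} A // Finite M.carrier}

variable {A}

/-- The submodule, as a finite bundled module. -/
def FinFMod.sub (M : FinFMod A) (N : Set M.1.carrier) (h : M.1.IsSubmod N) : FinFMod A :=
  ⟨M.1.sub N h, by haveI := M.2; exact inferInstanceAs (Finite ↥N)⟩

/-- The quotient, as a finite bundled module. -/
noncomputable def FinFMod.quot (M : FinFMod A) (N : Set M.1.carrier) (h : M.1.IsSubmod N) :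
    FinFMod A :=
  ⟨M.1.quot N h, by
    haveI := M.2
    exact inferInstanceAs (Finite {x : M.1.carrier // x = M.1.zero ∨ x ∉ N})⟩

/-- The wedge sum, as a finite bundled module. -/
def FinFMod.wedge (M N : FinFMod A) : FinFMod A :=
  ⟨M.1.wedge N.1, by
    haveI := M.2; haveI := N.2
    exact inferInstanceAs
      (Finite {p : M.1.carrier × N.1.carrier // p.1 = M.1.zero ∨ p.2 = N.1.zero})⟩

/-- The zero module. -/
def FinFMod.zeroMod : FinFMod A :=
  ⟨⟨PUnit, PUnit.unit, fun _ _ => PUnit.unit, fun _ => rfl, fun _ _ _ => rfl,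
    fun _ => rfl, fun _ => rfl⟩, inferInstance⟩

variable (A)

/-- Isomorphism classes of finite `A`-modules. -/
instance fmodSetoid : Setoid (FinFMod A) where
  r M N := Nonempty (Iso M.1 N.1)
  iseqv := ⟨fun M => ⟨Iso.refl M.1⟩, fun ⟨e⟩ => ⟨e.symm⟩, fun ⟨e⟩ ⟨f⟩ => ⟨e.trans f⟩⟩

/-- The set of isomorphism classes of finite `A`-modules. -/
def IsoCl := Quotient (fmodSetoid A)

variable {A}

/-- The isomorphism class of a finite module. -/
def clsOf (M : FinFMod A) : IsoCl A := Quotient.mk _ M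

/-- The collection of submodules of a module. -/
def Submods (M : FModule A) := {N : Set M.carrier // M.IsSubmod N}

open scoped Classical in
/-- The Hall algebra convolution product:
`(f ⋆ g)(M) = ∑_{N ⊆ M} f(M/N) g(N)`, the (finite) sum being over all submodules. -/
noncomputable def hallMul (f g : IsoCl A → ℚ) : IsoCl A → ℚ := fun c =>
  ∑ᶠ N : Submods (Quotient.out c).1,
    f (clsOf ((Quotient.out c).quot N.1 N.2)) * g (clsOf ((Quotient.out c).sub N.1 N.2))

open scoped Classical in
/-- The delta function supported at a single isomorphism class. -/
noncomputable def deltaF (c : IsoCl A) : IsoCl A → ℚ := fun d => if d = c then 1 else 0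

/-- Finitely supported functions (the underlying space of the Hall algebra). -/
def FinSupp (f : IsoCl A → ℚ) : Prop := (Function.support f).Finite

/-- Finitely supported functions of two variables. -/
def FinSupp₂ (F : IsoCl A → IsoCl A → ℚ) : Prop :=
  (Function.support (Function.uncurry F)).Finite

/-- The Hall algebra coproduct, in coordinates: `Δ(f)(M, N) = f(M ⊕ N)`. -/
noncomputable def coprodF (f : IsoCl A → ℚ) : IsoCl A → IsoCl A → ℚ := fun c d =>
  f (clsOf ((Quotient.out c).wedge (Quotient.out d)))

/-- The componentwise convolution product on two-variable functions
(the product on `H ⊗ H` in coordinates). -/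
noncomputable def hallMul₂ (F G : IsoCl A → IsoCl A → ℚ) : IsoCl A → IsoCl A → ℚ :=
  fun c d =>
    ∑ᶠ N : Submods (Quotient.out c).1, ∑ᶠ P : Submods (Quotient.out d).1,
      F (clsOf ((Quotient.out c).quot N.1 N.2)) (clsOf ((Quotient.out d).quot P.1 P.2)) *
      G (clsOf ((Quotient.out c).sub N.1 N.2)) (clsOf ((Quotient.out d).sub P.1 P.2))

/-- The dimension of an isomorphism class: `dim M = |M| - 1`. -/
noncomputable def dimCl (c : IsoCl A) : ℕ := Nat.card (Quotient.out c).1.carrier - 1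

/-- The counit: evaluation at the class of the zero module. -/
noncomputable def counitF (f : IsoCl A → ℚ) : ℚ := f (clsOf (FinFMod.zeroMod))

end FModule
namespace FModule
variable {A : Type v} [MonoidWithZero A]
attribute [reducible] Submods quot wedge sub

lemma clsOf_out (c : IsoCl A) : clsOf (Quotient.out c) = c := Quotient.out_eq c

lemma cls_eq_of_iso {M N : FinFMod A} (e : Iso M.1 N.1) : clsOf M = clsOf N :=
  Quotient.sound ⟨e⟩

noncomputable def out_iso (M : FinFMod A) : Iso (Quotient.out (clsOf M)).1 M.1 :=
  Classical.choice (Quotient.mk_out (s := fmodSetoid A) M)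

/-- transport a submodule along an iso -/
lemma isSubmod_image {M N : FModule A} (e : Iso M N) {P : Set M.carrier}
    (h : M.IsSubmod P) : N.IsSubmod (e.toEquiv '' P) := by
  constructor
  · exact ⟨M.zero, h.1, e.map_zero⟩
  · rintro a _ ⟨x, hx, rfl⟩
    exact ⟨M.smul a x, h.2 a x hx, e.map_smul a x⟩

lemma mem_image_iff {M N : FModule A} (e : Iso M N) {P : Set M.carrier}
    (x : M.carrier) : e.toEquiv x ∈ e.toEquiv '' P ↔ x ∈ P :=
  (Function.Injective.mem_set_image e.toEquiv.injective)

lemma eq_zero_iff {M N : FModule A} (e : Iso M N) (x : M.carrier) :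
    e.toEquiv x = N.zero ↔ x = M.zero := by
  rw [← e.map_zero]; exact ⟨fun h => e.toEquiv.injective h, fun h => by rw [h]⟩

/-- iso of subs -/
noncomputable def subIso {M N : FModule A} (e : Iso M N) {P : Set M.carrier}
    (h : M.IsSubmod P) : Iso (M.sub P h) (N.sub (e.toEquiv '' P) (isSubmod_image e h)) where
  toEquiv := e.toEquiv.image P
  map_zero := Subtype.ext e.map_zero
  map_smul a m := Subtype.ext (e.map_smul a m.1)

/-- iso of quots -/
noncomputable def quotIso {M N : FModule A} (e : Iso M N) {P : Set M.carrier}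
    (h : M.IsSubmod P) :
    Iso (M.quot P h) (N.quot (e.toEquiv '' P) (isSubmod_image e h)) where
  toEquiv := Equiv.subtypeEquiv e.toEquiv (fun x => by
    rw [eq_zero_iff e, mem_image_iff e])
  map_zero := Subtype.ext e.map_zero
  map_smul a m := by
    apply Subtype.ext
    by_cases hm : M.smul a m.1 ∈ P
    · have hm' : N.smul a (e.toEquiv m.1) ∈ e.toEquiv '' P := by
        rw [← e.map_smul, mem_image_iff e]; exact hm
      simp only [quot, Equiv.subtypeEquiv_apply, dif_pos hm]
      split
      · exact e.map_zero
      · exact absurd hm' ‹_›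
    · have hm' : N.smul a (e.toEquiv m.1) ∉ e.toEquiv '' P := by
        rw [← e.map_smul, mem_image_iff e]; exact hm
      simp only [quot, Equiv.subtypeEquiv_apply, dif_neg hm]
      split
      · exact absurd ‹_› hm'
      · exact e.map_smul a m.1

/-- equivalence of submodule collections along an iso -/
noncomputable def submodsEquiv {M N : FModule A} (e : Iso M N) :
    Submods M ≃ Submods N where
  toFun P := ⟨e.toEquiv '' P.1, isSubmod_image e P.2⟩
  invFun Q := ⟨e.symm.toEquiv '' Q.1, isSubmod_image e.symm Q.2⟩
  left_inv P := by
    apply Subtype.ext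
    show e.toEquiv.symm '' (e.toEquiv '' P.1) = P.1
    simp [Set.image_image]
  right_inv Q := by
    apply Subtype.ext
    show e.toEquiv '' (e.toEquiv.symm '' Q.1) = Q.1
    simp [Set.image_image]

open scoped Classical in
noncomputable def hallSum (f g : IsoCl A → ℚ) (M : FinFMod A) : ℚ :=
  ∑ᶠ N : Submods M.1,
    f (clsOf (M.quot N.1 N.2)) * g (clsOf (M.sub N.1 N.2))

lemma hallMul_eq (f g : IsoCl A → ℚ) (c : IsoCl A) :
    hallMul f g c = hallSum f g (Quotient.out c) := rfl

instance submodsFinite (M : FinFMod A) : Finite (Submods M.1) := by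
  haveI := M.2
  exact inferInstanceAs (Finite {N : Set M.1.carrier // M.1.IsSubmod N})

lemma hallSum_congr (f g : IsoCl A → ℚ) {M N : FinFMod A} (e : Iso M.1 N.1) :
    hallSum f g M = hallSum f g N := by
  unfold hallSum
  haveI := Fintype.ofFinite (Submods M.1)
  haveI := Fintype.ofFinite (Submods N.1)
  rw [finsum_eq_sum_of_fintype, finsum_eq_sum_of_fintype]
  apply Fintype.sum_equiv (submodsEquiv e)
  intro P
  congr 1
  · exact congrArg f (cls_eq_of_iso (quotIso e P.2))
  · exact congrArg g (cls_eq_of_iso (subIso e P.2))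

lemma hallMul_clsOf (f g : IsoCl A → ℚ) (M : FinFMod A) :
    hallMul f g (clsOf M) = hallSum f g M := by
  rw [hallMul_eq]
  exact hallSum_congr f g (out_iso M)

end FModule

namespace FModule
variable {A : Type v} [MonoidWithZero A]

/-- congruence of wedge sums -/
def wedgeIso {M M' N N' : FModule A} (e : Iso M M') (f : Iso N N') :
    Iso (M.wedge N) (M'.wedge N') where
  toEquiv := Equiv.subtypeEquiv (e.toEquiv.prodCongr f.toEquiv) (fun p => by
    simp only [Equiv.prodCongr_apply, Prod.map]
    rw [eq_zero_iff e, eq_zero_iff f])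
  map_zero := Subtype.ext (Prod.ext e.map_zero f.map_zero)
  map_smul a m := Subtype.ext (Prod.ext (e.map_smul a m.1.1) (f.map_smul a m.1.2))

def wedgeComm (M N : FModule A) : Iso (M.wedge N) (N.wedge M) where
  toEquiv := Equiv.subtypeEquiv (Equiv.prodComm _ _) (fun p => or_comm)
  map_zero := rfl
  map_smul a m := rfl

def wedgeAssoc (M N P : FModule A) : Iso ((M.wedge N).wedge P) (M.wedge (N.wedge P)) where
  toEquiv := {
    toFun := fun p => ⟨(p.1.1.1.1, ⟨(p.1.1.1.2, p.1.2), by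
        rcases p.2 with h | h
        · exact Or.inl (congrArg (fun q => q.1.2) h)
        · exact Or.inr h⟩), by
      rcases p.2 with h | h
      · exact Or.inl (congrArg (fun q => q.1.1) h)
      · rcases p.1.1.2 with h1 | h1
        · exact Or.inl h1
        · exact Or.inr (Subtype.ext (Prod.ext h1 h))⟩
    invFun := fun p => ⟨(⟨(p.1.1, p.1.2.1.1), by
        rcases p.2 with h | h
        · exact Or.inl h
        · exact Or.inr (congrArg (fun q => (q.1.1 : _)) h)⟩, p.1.2.1.2), by
      rcases p.2 with h | h
      · rcases p.1.2.2 with h1 | h1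
        · exact Or.inl (Subtype.ext (Prod.ext h h1))
        · exact Or.inr h1
      · exact Or.inr (congrArg (fun q => q.1.2) h)⟩
    left_inv := fun p => Subtype.ext (Prod.ext (Subtype.ext rfl) rfl)
    right_inv := fun p => Subtype.ext (Prod.ext rfl (Subtype.ext rfl)) }
  map_zero := rfl
  map_smul a m := rfl

/-- any module with subsingleton carrier is iso to the zero module -/
noncomputable def isoZero (M : FModule A) (h : Subsingleton M.carrier) :
    Iso M FinFMod.zeroMod.1 where
  toEquiv := by
    haveI : Unique M.carrier := uniqueOfSubsingleton M.zero
    exact Equiv.equivPUnit M.carrier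
  map_zero := rfl
  map_smul a m := rfl

/-- zeroMod ⊕ N ≅ N -/
def zeroWedge (N : FModule A) : Iso ((FinFMod.zeroMod (A := A)).1.wedge N) N where
  toEquiv := {
    toFun := fun p => p.1.2
    invFun := fun n => ⟨(PUnit.unit, n), Or.inl rfl⟩
    left_inv := fun p => Subtype.ext (Prod.ext rfl rfl)
    right_inv := fun n => rfl }
  map_zero := rfl
  map_smul a m := rfl

/-- the wedge carrier splits -/
def wedgeSplit (M N : FModule A) [DecidableEq M.carrier] :
    (M.wedge N).carrier ≃ ({x : M.carrier // x ≠ M.zero} ⊕ N.carrier) where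
  toFun p := if h : p.1.1 = M.zero then Sum.inr p.1.2
    else Sum.inl ⟨p.1.1, h⟩
  invFun q := q.elim (fun x => ⟨(x.1, N.zero), Or.inr rfl⟩)
    (fun y => ⟨(M.zero, y), Or.inl rfl⟩)
  left_inv p := by
    rcases p with ⟨⟨x, y⟩, hp⟩
    dsimp only
    by_cases h : x = M.zero
    · rw [dif_pos h]
      exact Subtype.ext (Prod.ext h.symm rfl)
    · rw [dif_neg h]
      exact Subtype.ext (Prod.ext rfl (hp.resolve_left h).symm)
  right_inv q := by
    rcases q with x | y
    · dsimp only [Sum.elim_inl]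
      exact dif_neg x.2
    · dsimp only [Sum.elim_inr]
      exact dif_pos rfl

lemma card_pos (M : FinFMod A) : 0 < Nat.card M.1.carrier := by
  haveI := M.2
  exact Nat.card_pos_iff.mpr ⟨⟨M.1.zero⟩, inferInstance⟩

lemma card_wedge (M N : FinFMod A) :
    Nat.card (M.wedge N).1.carrier = Nat.card M.1.carrier - 1 + Nat.card N.1.carrier := by
  classical
  haveI := M.2; haveI := N.2
  show Nat.card (M.1.wedge N.1).carrier = _
  rw [Nat.card_congr (wedgeSplit M.1 N.1), Nat.card_sum]
  congr 1
  haveI := Fintype.ofFinite M.1.carrier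
  rw [Nat.card_eq_fintype_card, Nat.card_eq_fintype_card]
  rw [Fintype.card_subtype_compl]
  congr 1

lemma dimCl_clsOf (M : FinFMod A) : dimCl (clsOf M) = Nat.card M.1.carrier - 1 := by
  unfold dimCl
  rw [Nat.card_congr (out_iso M).toEquiv]

end FModule

namespace FModule
variable {A : Type v} [MonoidWithZero A]

lemma card_sub (M : FinFMod A) (N : Set M.1.carrier) (h : M.1.IsSubmod N) :
    Nat.card (M.sub N h).1.carrier = N.ncard :=
  (Nat.card_coe_set_eq N)

lemma card_quot (M : FinFMod A) (N : Set M.1.carrier) (h : M.1.IsSubmod N) :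
    Nat.card (M.quot N h).1.carrier = (Nat.card M.1.carrier - N.ncard) + 1 := by
  haveI := M.2
  have hset : {x : M.1.carrier | x = M.1.zero ∨ x ∉ N} = insert M.1.zero Nᶜ := by
    ext x; simp [Set.mem_insert_iff, Set.mem_compl_iff]
  have : Nat.card (M.quot N h).1.carrier = ({x : M.1.carrier | x = M.1.zero ∨ x ∉ N}).ncard := by
    rw [← Nat.card_coe_set_eq]
    rfl
  rw [this, hset, Set.ncard_insert_of_notMem (by simp [h.1])]
  have hc : Nᶜ.ncard = Nat.card M.1.carrier - N.ncard := by
    have := Set.ncard_add_ncard_compl N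
    omega
  rw [hc]

lemma univ_submod (M : FModule A) : M.IsSubmod Set.univ :=
  ⟨trivial, fun _ _ _ => trivial⟩

lemma bot_submod (M : FModule A) : M.IsSubmod {M.zero} := by
  constructor
  · rfl
  · intro a m hm
    rw [Set.mem_singleton_iff] at hm ⊢
    rw [hm, M.smul_zero]

def subUnivIso (M : FModule A) : Iso (M.sub Set.univ (univ_submod M)) M where
  toEquiv := Equiv.Set.univ _
  map_zero := rfl
  map_smul a m := rfl

def quotBotIso (M : FModule A) : Iso (M.quot {M.zero} (bot_submod M)) M where
  toEquiv := Equiv.subtypeUnivEquiv (fun x => by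
    rcases Classical.em (x = M.zero) with h | h
    · exact Or.inl h
    · exact Or.inr (by simpa using h))
  map_zero := rfl
  map_smul a m := by
    show ((M.quot {M.zero} (bot_submod M)).smul a m).1 = M.smul a m.1
    by_cases hm : M.smul a m.1 ∈ ({M.zero} : Set M.carrier)
    · simp only [quot, dif_pos hm]
      exact (Set.mem_singleton_iff.mp hm).symm
    · simp only [quot, dif_neg hm]

/-- subsingleton carrier from class equal to zero class -/
lemma subsingleton_of_cls_eq_zero (M : FinFMod A) (h : clsOf M = clsOf (FinFMod.zeroMod (A := A))) :
    Subsingleton M.1.carrier := by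
  have e : Iso M.1 (FinFMod.zeroMod (A := A)).1 := Classical.choice (Quotient.exact h)
  haveI : Subsingleton (FinFMod.zeroMod (A := A)).1.carrier :=
    inferInstanceAs (Subsingleton PUnit)
  exact Equiv.subsingleton e.toEquiv

lemma cls_sub_eq_zero_iff (M : FinFMod A) (N : Set M.1.carrier) (h : M.1.IsSubmod N) :
    clsOf (M.sub N h) = clsOf (FinFMod.zeroMod (A := A)) ↔ N = {M.1.zero} := by
  constructor
  · intro hc
    have hs := subsingleton_of_cls_eq_zero _ hc
    ext x
    simp only [Set.mem_singleton_iff]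
    constructor
    · intro hx
      have := hs.elim (⟨x, hx⟩ : (M.sub N h).1.carrier) ⟨M.1.zero, h.1⟩
      exact congrArg Subtype.val this
    · intro hx; rw [hx]; exact h.1
  · rintro rfl
    refine cls_eq_of_iso (isoZero _ ?_)
    constructor
    rintro ⟨x, hx⟩ ⟨y, hy⟩
    apply Subtype.ext
    rw [Set.mem_singleton_iff] at hx hy
    show x = y
    rw [hx, hy]

lemma cls_quot_eq_zero_iff (M : FinFMod A) (N : Set M.1.carrier) (h : M.1.IsSubmod N) :
    clsOf (M.quot N h) = clsOf (FinFMod.zeroMod (A := A)) ↔ N = Set.univ := by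
  constructor
  · intro hc
    have hs := subsingleton_of_cls_eq_zero _ hc
    ext x
    simp only [Set.mem_univ, iff_true]
    by_contra hx
    have := hs.elim (⟨x, Or.inr hx⟩ : (M.quot N h).1.carrier)
      ⟨M.1.zero, Or.inl rfl⟩
    have hx0 : x = M.1.zero := congrArg Subtype.val this
    exact hx (hx0 ▸ h.1)
  · rintro rfl
    refine cls_eq_of_iso (isoZero _ ?_)
    constructor
    rintro ⟨x, hx⟩ ⟨y, hy⟩
    apply Subtype.ext
    have hx0 : x = M.1.zero := hx.resolve_right (by simp)
    have hy0 : y = M.1.zero := hy.resolve_right (by simp)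
    show x = y
    rw [hx0, hy0]

lemma cls_sub_univ (M : FinFMod A) : clsOf (M.sub Set.univ (univ_submod M.1)) = clsOf M :=
  cls_eq_of_iso (subUnivIso M.1)

lemma cls_quot_bot (M : FinFMod A) : clsOf (M.quot {M.1.zero} (bot_submod M.1)) = clsOf M :=
  cls_eq_of_iso (quotBotIso M.1)

lemma cls_quot_univ (M : FinFMod A) :
    clsOf (M.quot Set.univ (univ_submod M.1)) = clsOf (FinFMod.zeroMod (A := A)) :=
  (cls_quot_eq_zero_iff M _ _).mpr rfl

lemma cls_sub_bot (M : FinFMod A) :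
    clsOf (M.sub {M.1.zero} (bot_submod M.1)) = clsOf (FinFMod.zeroMod (A := A)) :=
  (cls_sub_eq_zero_iff M _ _).mpr rfl

end FModule

namespace FModule
variable {A : Type v} [MonoidWithZero A]

lemma hallSum_eq_sum (f g : IsoCl A → ℚ) (M : FinFMod A) [Fintype (Submods M.1)] :
    hallSum f g M = ∑ N : Submods M.1,
      f (clsOf (M.quot N.1 N.2)) * g (clsOf (M.sub N.1 N.2)) := by
  unfold hallSum
  exact finsum_eq_sum_of_fintype _

lemma deltaF_apply_self (c : IsoCl A) : deltaF c c = 1 := by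
  simp [deltaF]

lemma deltaF_apply_ne {c d : IsoCl A} (h : d ≠ c) : deltaF c d = 0 := by
  simp [deltaF, h]

lemma deltaF_ne_zero {c d : IsoCl A} (h : deltaF c d ≠ 0) : d = c := by
  by_contra hd
  exact h (deltaF_apply_ne hd)

def univSubmod (M : FinFMod A) : Submods M.1 := ⟨Set.univ, univ_submod M.1⟩

def botSubmod (M : FinFMod A) : Submods M.1 := ⟨{M.1.zero}, bot_submod M.1⟩

lemma hallMul_delta_left (f : IsoCl A → ℚ) :
    hallMul (deltaF (clsOf (FinFMod.zeroMod (A := A)))) f = f := by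
  funext c
  rw [hallMul_eq]
  haveI : Fintype (Submods (Quotient.out c).1) := Fintype.ofFinite _
  rw [hallSum_eq_sum]
  refine (Fintype.sum_eq_single (univSubmod (Quotient.out c)) ?_).trans ?_
  · intro N hN
    rw [deltaF_apply_ne, zero_mul]
    intro hq
    exact hN (Subtype.ext ((cls_quot_eq_zero_iff _ N.1 N.2).mp hq))
  · dsimp only [univSubmod]
    rw [cls_quot_univ, deltaF_apply_self, one_mul, cls_sub_univ, clsOf_out]
  
lemma hallMul_delta_right (f : IsoCl A → ℚ) :
    hallMul f (deltaF (clsOf (FinFMod.zeroMod (A := A)))) = f := by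
  funext c
  rw [hallMul_eq]
  haveI : Fintype (Submods (Quotient.out c).1) := Fintype.ofFinite _
  rw [hallSum_eq_sum]
  refine (Fintype.sum_eq_single (botSubmod (Quotient.out c)) ?_).trans ?_
  · intro N hN
    rw [deltaF_apply_ne, mul_zero]
    intro hq
    exact hN (Subtype.ext ((cls_sub_eq_zero_iff _ N.1 N.2).mp hq))
  · dsimp only [botSubmod]
    rw [cls_sub_bot, deltaF_apply_self, mul_one, cls_quot_bot, clsOf_out]

instance uniqueSubmodsZero : Unique (Submods (FinFMod.zeroMod (A := A)).1) where
  default := ⟨Set.univ, univ_submod _⟩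
  uniq N := by
    apply Subtype.ext
    ext x
    simp only [Set.mem_univ, iff_true]
    show x ∈ N.1
    have : x = (FinFMod.zeroMod (A := A)).1.zero := rfl
    rw [this]
    exact N.2.1

lemma counit_mul (f g : IsoCl A → ℚ) :
    counitF (hallMul f g) = counitF f * counitF g := by
  unfold counitF
  rw [hallMul_clsOf]
  unfold hallSum
  rw [finsum_unique]
  show f (clsOf (FinFMod.quot _ Set.univ _)) * g (clsOf (FinFMod.sub _ Set.univ _)) = _
  rw [cls_quot_univ, cls_sub_univ]

lemma wedge_cls_zero_iff (c d : IsoCl A) :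
    clsOf ((Quotient.out c).wedge (Quotient.out d)) = clsOf (FinFMod.zeroMod (A := A)) ↔
      (c = clsOf (FinFMod.zeroMod (A := A)) ∧ d = clsOf (FinFMod.zeroMod (A := A))) := by
  constructor
  · intro h
    have hs := subsingleton_of_cls_eq_zero _ h
    constructor
    · rw [← clsOf_out c]
      refine cls_eq_of_iso (isoZero _ ?_)
      constructor
      intro x y
      have := hs.elim
        (⟨(x, (Quotient.out d).1.zero), Or.inr rfl⟩ : ((Quotient.out c).wedge (Quotient.out d)).1.carrier)
        ⟨(y, (Quotient.out d).1.zero), Or.inr rfl⟩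
      exact congrArg (fun p => p.1.1) this
    · rw [← clsOf_out d]
      refine cls_eq_of_iso (isoZero _ ?_)
      constructor
      intro x y
      have := hs.elim
        (⟨((Quotient.out c).1.zero, x), Or.inl rfl⟩ : ((Quotient.out c).wedge (Quotient.out d)).1.carrier)
        ⟨((Quotient.out c).1.zero, y), Or.inl rfl⟩
      exact congrArg (fun p => p.1.2) this
  · rintro ⟨hc, hd⟩
    refine cls_eq_of_iso (isoZero _ ?_)
    haveI h1 := subsingleton_of_cls_eq_zero (Quotient.out c) (by rw [clsOf_out]; exact hc)
    haveI h2 := subsingleton_of_cls_eq_zero (Quotient.out d) (by rw [clsOf_out]; exact hd)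
    constructor
    intro p q
    exact Subtype.ext (Prod.ext (h1.elim _ _) (h2.elim _ _))

lemma coprod_unit (c d : IsoCl A) :
    coprodF (deltaF (clsOf (FinFMod.zeroMod (A := A)))) c d =
      deltaF (clsOf (FinFMod.zeroMod (A := A))) c * deltaF (clsOf (FinFMod.zeroMod (A := A))) d := by
  unfold coprodF
  by_cases h : c = clsOf (FinFMod.zeroMod (A := A)) ∧ d = clsOf (FinFMod.zeroMod (A := A))
  · rw [(wedge_cls_zero_iff c d).mpr h, h.1, h.2, deltaF_apply_self]
    norm_num
  · rw [deltaF_apply_ne (fun hw => h ((wedge_cls_zero_iff c d).mp hw))]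
    rcases not_and_or.mp h with h1 | h1
    · rw [deltaF_apply_ne h1, zero_mul]
    · rw [deltaF_apply_ne h1, mul_zero]

lemma ncard_pos_of_submod (M : FinFMod A) {N : Set M.1.carrier} (h : M.1.IsSubmod N) :
    1 ≤ N.ncard := by
  haveI := M.2
  exact (Set.ncard_pos (Set.toFinite N)).mpr ⟨M.1.zero, h.1⟩

lemma ncard_le_card (M : FinFMod A) (N : Set M.1.carrier) :
    N.ncard ≤ Nat.card M.1.carrier := by
  haveI := M.2
  calc N.ncard ≤ (Set.univ : Set M.1.carrier).ncard :=
        Set.ncard_le_ncard (Set.subset_univ N) Set.finite_univ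
    _ = Nat.card M.1.carrier := Set.ncard_univ _

lemma grading_mul (c d e : IsoCl A) (h : hallMul (deltaF c) (deltaF d) e ≠ 0) :
    dimCl e = dimCl c + dimCl d := by
  rw [hallMul_eq] at h
  unfold hallSum at h
  have : ∃ N : Submods (Quotient.out e).1,
      deltaF c (clsOf ((Quotient.out e).quot N.1 N.2)) *
      deltaF d (clsOf ((Quotient.out e).sub N.1 N.2)) ≠ 0 := by
    by_contra hall
    push_neg at hall
    exact h (finsum_eq_zero_of_forall_eq_zero hall)
  obtain ⟨N, hN⟩ := this
  have h1 := deltaF_ne_zero (left_ne_zero_of_mul hN)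
  have h2 := deltaF_ne_zero (right_ne_zero_of_mul hN)
  have hc : dimCl c = Nat.card (Quotient.out e).1.carrier - N.1.ncard := by
    rw [← h1, dimCl_clsOf, card_quot]
    omega
  have hd : dimCl d = N.1.ncard - 1 := by
    rw [← h2, dimCl_clsOf, card_sub]
  have he : dimCl e = Nat.card (Quotient.out e).1.carrier - 1 := rfl
  have k1 := ncard_pos_of_submod (Quotient.out e) N.2
  have k2 := ncard_le_card (Quotient.out e) N.1
  have k3 := card_pos (Quotient.out e)
  omega

lemma grading_coprod (c d : IsoCl A) :
    dimCl (clsOf ((Quotient.out c).wedge (Quotient.out d))) = dimCl c + dimCl d := by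
  rw [dimCl_clsOf, card_wedge]
  have := card_pos (Quotient.out c)
  have := card_pos (Quotient.out d)
  show _ = (Nat.card (Quotient.out c).1.carrier - 1) + (Nat.card (Quotient.out d).1.carrier - 1)
  omega

lemma connected (c : IsoCl A) (h : dimCl c = 0) : c = clsOf (FinFMod.zeroMod (A := A)) := by
  have hc : Nat.card (Quotient.out c).1.carrier = 1 := by
    have := card_pos (Quotient.out c)
    unfold dimCl at h
    omega
  rw [← clsOf_out c]
  refine cls_eq_of_iso (isoZero _ ?_)
  haveI := (Quotient.out c).2
  exact (Nat.card_eq_one_iff_unique.mp hc).1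

end FModule

namespace FModule
variable {A : Type v} [MonoidWithZero A]

lemma cls_wedge_out_left (M N : FinFMod A) :
    clsOf ((Quotient.out (clsOf M)).wedge N) = clsOf (M.wedge N) :=
  cls_eq_of_iso (wedgeIso (out_iso M) (Iso.refl N.1))

lemma cls_wedge_out_right (M N : FinFMod A) :
    clsOf (M.wedge (Quotient.out (clsOf N))) = clsOf (M.wedge N) :=
  cls_eq_of_iso (wedgeIso (Iso.refl M.1) (out_iso N))

lemma coprod_comm (f : IsoCl A → ℚ) (c d : IsoCl A) : coprodF f c d = coprodF f d c := by
  unfold coprodF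
  exact congrArg f (cls_eq_of_iso (wedgeComm (Quotient.out c).1 (Quotient.out d).1))

lemma coprod_assoc (f : IsoCl A → ℚ) (a b c : IsoCl A) :
    coprodF (fun x => coprodF f x c) a b = coprodF (fun x => coprodF f a x) b c := by
  unfold coprodF
  refine congrArg f ?_
  rw [cls_wedge_out_left, cls_wedge_out_right]
  exact cls_eq_of_iso (wedgeAssoc (Quotient.out a).1 (Quotient.out b).1 (Quotient.out c).1)

lemma coprod_counit (f : IsoCl A → ℚ) (c : IsoCl A) :
    coprodF f (clsOf (FinFMod.zeroMod (A := A))) c = f c ∧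
    coprodF f c (clsOf (FinFMod.zeroMod (A := A))) = f c := by
  constructor
  · unfold coprodF
    rw [cls_wedge_out_left]
    refine (congrArg f (cls_eq_of_iso (zeroWedge (Quotient.out c).1))).trans ?_
    rw [clsOf_out]
  · unfold coprodF
    rw [cls_wedge_out_right]
    refine (congrArg f (cls_eq_of_iso
      ((wedgeComm _ _).trans (zeroWedge (Quotient.out c).1)))).trans ?_
    rw [clsOf_out]

end FModule
namespace FModule
variable {A : Type v} [MonoidWithZero A]

lemma pairSubmod {C D : FModule A} (N : Submods C) (P : Submods D) :
    (C.wedge D).IsSubmod {p : (C.wedge D).carrier | p.1.1 ∈ N.1 ∧ p.1.2 ∈ P.1} := by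
  constructor
  · exact ⟨N.2.1, P.2.1⟩
  · intro a p hp
    exact ⟨N.2.2 a _ hp.1, P.2.2 a _ hp.2⟩

/-- submodules of a wedge are pairs of submodules -/
noncomputable def wedgeSubmodEquiv (C D : FModule A) :
    Submods (C.wedge D) ≃ Submods C × Submods D where
  toFun R :=
    (⟨{x : C.carrier | (⟨(x, D.zero), Or.inr rfl⟩ : (C.wedge D).carrier) ∈ R.1}, by
      constructor
      · exact R.2.1
      · intro a x hx
        have h2 := R.2.2 a _ hx
        have he : (C.wedge D).smul a ⟨(x, D.zero), Or.inr rfl⟩ =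
            (⟨(C.smul a x, D.zero), Or.inr rfl⟩ : (C.wedge D).carrier) :=
          Subtype.ext (Prod.ext rfl (D.smul_zero a))
        rwa [he] at h2⟩,
    ⟨{y : D.carrier | (⟨(C.zero, y), Or.inl rfl⟩ : (C.wedge D).carrier) ∈ R.1}, by
      constructor
      · exact R.2.1
      · intro a y hy
        have h2 := R.2.2 a _ hy
        have he : (C.wedge D).smul a ⟨(C.zero, y), Or.inl rfl⟩ =
            (⟨(C.zero, D.smul a y), Or.inl rfl⟩ : (C.wedge D).carrier) :=
          Subtype.ext (Prod.ext (C.smul_zero a) rfl)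
        rwa [he] at h2⟩)
  invFun NP := ⟨_, pairSubmod NP.1 NP.2⟩
  left_inv R := by
    apply Subtype.ext
    ext p
    simp only [Set.mem_setOf_eq]
    constructor
    · rintro ⟨h1, h2⟩
      rcases p.2 with h | h
      · have : p = (⟨(C.zero, p.1.2), Or.inl rfl⟩ : (C.wedge D).carrier) :=
          Subtype.ext (Prod.ext h rfl)
        rw [this]; exact h2
      · have : p = (⟨(p.1.1, D.zero), Or.inr rfl⟩ : (C.wedge D).carrier) :=
          Subtype.ext (Prod.ext rfl h)
        rw [this]; exact h1
    · intro hp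
      constructor
      · rcases p.2 with h | h
        · have : (⟨(p.1.1, D.zero), Or.inr rfl⟩ : (C.wedge D).carrier) = (C.wedge D).zero :=
            Subtype.ext (Prod.ext h rfl)
          rw [this]; exact R.2.1
        · have : (⟨(p.1.1, D.zero), Or.inr rfl⟩ : (C.wedge D).carrier) = p :=
            Subtype.ext (Prod.ext rfl h.symm)
          rw [this]; exact hp
      · rcases p.2 with h | h
        · have : (⟨(C.zero, p.1.2), Or.inl rfl⟩ : (C.wedge D).carrier) = p :=
            Subtype.ext (Prod.ext h.symm rfl)
          rw [this]; exact hp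
        · have : (⟨(C.zero, p.1.2), Or.inl rfl⟩ : (C.wedge D).carrier) = (C.wedge D).zero :=
            Subtype.ext (Prod.ext rfl h)
          rw [this]; exact R.2.1
  right_inv NP := by
    refine Prod.ext (Subtype.ext ?_) (Subtype.ext ?_)
    · ext x
      simp only [Set.mem_setOf_eq]
      exact ⟨fun h => h.1, fun h => ⟨h, NP.2.2.1⟩⟩
    · ext y
      simp only [Set.mem_setOf_eq]
      exact ⟨fun h => h.2, fun h => ⟨NP.1.2.1, h⟩⟩

/-- sub of wedge along a pair submodule -/
def wedgeSubIso {C D : FModule A} (N : Submods C) (P : Submods D) :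
    Iso ((C.wedge D).sub _ (pairSubmod N P))
      ((C.sub N.1 N.2).wedge (D.sub P.1 P.2)) where
  toEquiv := {
    toFun := fun p => ⟨(⟨p.1.1.1, p.2.1⟩, ⟨p.1.1.2, p.2.2⟩), by
      rcases p.1.2 with h | h
      · exact Or.inl (Subtype.ext h)
      · exact Or.inr (Subtype.ext h)⟩
    invFun := fun q => ⟨⟨(q.1.1.1, q.1.2.1), by
      rcases q.2 with h | h
      · exact Or.inl (congrArg Subtype.val h)
      · exact Or.inr (congrArg Subtype.val h)⟩, ⟨q.1.1.2, q.1.2.2⟩⟩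
    left_inv := fun p => rfl
    right_inv := fun q => rfl }
  map_zero := rfl
  map_smul a p := rfl

open Classical in
lemma quot_smul_val {M : FModule A} {S : Set M.carrier} (h : M.IsSubmod S) (a : A)
    (m : (M.quot S h).carrier) :
    ((M.quot S h).smul a m).1 = if M.smul a m.1 ∈ S then M.zero else M.smul a m.1 := by
  by_cases hm : M.smul a m.1 ∈ S
  · simp only [quot, dif_pos hm, if_pos hm]
  · simp only [quot, dif_neg hm, if_neg hm]

open Classical in
/-- the underlying map for `wedgeQuotIso` -/
noncomputable def wq {C D : FModule A} (N : Submods C) (P : Submods D)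
    (p : ((C.wedge D).quot _ (pairSubmod N P)).carrier) :
    ((C.quot N.1 N.2).wedge (D.quot P.1 P.2)).carrier :=
  ⟨(if hx : p.1.1.1 ∈ N.1 then ⟨C.zero, Or.inl rfl⟩ else ⟨p.1.1.1, Or.inr hx⟩,
    if hy : p.1.1.2 ∈ P.1 then ⟨D.zero, Or.inl rfl⟩ else ⟨p.1.1.2, Or.inr hy⟩), by
    rcases p.1.2 with h | h
    · refine Or.inl ?_
      rw [dif_pos (show p.1.1.1 ∈ N.1 by rw [h]; exact N.2.1)]
    · refine Or.inr ?_
      rw [dif_pos (show p.1.1.2 ∈ P.1 by rw [h]; exact P.2.1)]⟩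

open Classical in
lemma wq_val_1 {C D : FModule A} (N : Submods C) (P : Submods D)
    (p : ((C.wedge D).quot _ (pairSubmod N P)).carrier) :
    ((wq N P p).1.1).1 = if p.1.1.1 ∈ N.1 then C.zero else p.1.1.1 := by
  by_cases hx : p.1.1.1 ∈ N.1
  · simp only [wq, dif_pos hx, if_pos hx]
  · simp only [wq, dif_neg hx, if_neg hx]

open Classical in
lemma wq_val_2 {C D : FModule A} (N : Submods C) (P : Submods D)
    (p : ((C.wedge D).quot _ (pairSubmod N P)).carrier) :
    ((wq N P p).1.2).1 = if p.1.1.2 ∈ P.1 then D.zero else p.1.1.2 := by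
  by_cases hy : p.1.1.2 ∈ P.1
  · simp only [wq, dif_pos hy, if_pos hy]
  · simp only [wq, dif_neg hy, if_neg hy]

open Classical in
lemma quot_smul_wedge_val {C D : FModule A} (N : Submods C) (P : Submods D) (a : A)
    (p : ((C.wedge D).quot _ (pairSubmod N P)).carrier) :
    (((C.wedge D).quot _ (pairSubmod N P)).smul a p).1.1 =
      if C.smul a p.1.1.1 ∈ N.1 ∧ D.smul a p.1.1.2 ∈ P.1
      then (C.zero, D.zero) else (C.smul a p.1.1.1, D.smul a p.1.1.2) := by
  rw [quot_smul_val]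
  by_cases hR : (C.wedge D).smul a p.1 ∈ {q : (C.wedge D).carrier | q.1.1 ∈ N.1 ∧ q.1.2 ∈ P.1}
  · rw [if_pos hR,
      if_pos (show C.smul a p.1.1.1 ∈ N.1 ∧ D.smul a p.1.1.2 ∈ P.1 from hR)]
  · rw [if_neg hR,
      if_neg (show ¬(C.smul a p.1.1.1 ∈ N.1 ∧ D.smul a p.1.1.2 ∈ P.1) from hR)]

open Classical in
lemma wq_zero {C D : FModule A} (N : Submods C) (P : Submods D) :
    wq N P ((C.wedge D).quot _ (pairSubmod N P)).zero =
      ((C.quot N.1 N.2).wedge (D.quot P.1 P.2)).zero := by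
  apply Subtype.ext
  refine Prod.ext (Subtype.ext ?_) (Subtype.ext ?_)
  · rw [wq_val_1]
    show (if C.zero ∈ N.1 then C.zero else C.zero) = C.zero
    rw [if_pos N.2.1]
  · rw [wq_val_2]
    show (if D.zero ∈ P.1 then D.zero else D.zero) = D.zero
    rw [if_pos P.2.1]

open Classical in
lemma wq_smul {C D : FModule A} (N : Submods C) (P : Submods D) (a : A)
    (p : ((C.wedge D).quot _ (pairSubmod N P)).carrier) :
    wq N P (((C.wedge D).quot _ (pairSubmod N P)).smul a p) =
      ((C.quot N.1 N.2).wedge (D.quot P.1 P.2)).smul a (wq N P p) := by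
  apply Subtype.ext
  refine Prod.ext (Subtype.ext ?_) (Subtype.ext ?_)
  · rw [wq_val_1]
    show _ = ((C.quot N.1 N.2).smul a (wq N P p).1.1).1
    rw [quot_smul_val, quot_smul_val, wq_val_1]
    by_cases hR : (C.wedge D).smul a p.1 ∈ {q : (C.wedge D).carrier | q.1.1 ∈ N.1 ∧ q.1.2 ∈ P.1}
    · rw [if_pos hR, if_pos (show ((C.wedge D).zero).1.1 ∈ N.1 from N.2.1)]
      have hax : C.smul a p.1.1.1 ∈ N.1 := hR.1
      by_cases hx : p.1.1.1 ∈ N.1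
      · rw [if_pos hx, if_pos (show C.smul a C.zero ∈ N.1 by rw [C.smul_zero]; exact N.2.1)]
      · rw [if_neg hx, if_pos hax]
    · rw [if_neg hR]
      by_cases hax : C.smul a p.1.1.1 ∈ N.1
      · rw [if_pos (show ((C.wedge D).smul a p.1).1.1 ∈ N.1 from hax)]
        by_cases hx : p.1.1.1 ∈ N.1
        · rw [if_pos hx, if_pos (show C.smul a C.zero ∈ N.1 by rw [C.smul_zero]; exact N.2.1)]
        · rw [if_neg hx, if_pos hax]
      · rw [if_neg (show ¬(((C.wedge D).smul a p.1).1.1 ∈ N.1) from hax)]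
        have hx : p.1.1.1 ∉ N.1 := fun hc => hax (N.2.2 a _ hc)
        rw [if_neg hx, if_neg hax]
  · rw [wq_val_2]
    show _ = ((D.quot P.1 P.2).smul a (wq N P p).1.2).1
    rw [quot_smul_val, quot_smul_val, wq_val_2]
    by_cases hR : (C.wedge D).smul a p.1 ∈ {q : (C.wedge D).carrier | q.1.1 ∈ N.1 ∧ q.1.2 ∈ P.1}
    · rw [if_pos hR, if_pos (show ((C.wedge D).zero).1.2 ∈ P.1 from P.2.1)]
      have hay : D.smul a p.1.1.2 ∈ P.1 := hR.2
      by_cases hy : p.1.1.2 ∈ P.1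
      · rw [if_pos hy, if_pos (show D.smul a D.zero ∈ P.1 by rw [D.smul_zero]; exact P.2.1)]
      · rw [if_neg hy, if_pos hay]
    · rw [if_neg hR]
      by_cases hay : D.smul a p.1.1.2 ∈ P.1
      · rw [if_pos (show ((C.wedge D).smul a p.1).1.2 ∈ P.1 from hay)]
        by_cases hy : p.1.1.2 ∈ P.1
        · rw [if_pos hy, if_pos (show D.smul a D.zero ∈ P.1 by rw [D.smul_zero]; exact P.2.1)]
        · rw [if_neg hy, if_pos hay]
      · rw [if_neg (show ¬(((C.wedge D).smul a p.1).1.2 ∈ P.1) from hay)]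
        have hy : p.1.1.2 ∉ P.1 := fun hc => hay (P.2.2 a _ hc)
        rw [if_neg hy, if_neg hay]

set_option maxHeartbeats 1600000 in
open Classical in
/-- quot of wedge along a pair submodule -/
noncomputable def wedgeQuotIso {C D : FModule A} (N : Submods C) (P : Submods D) :
    Iso ((C.wedge D).quot _ (pairSubmod N P))
      ((C.quot N.1 N.2).wedge (D.quot P.1 P.2)) where
  toEquiv := {
    toFun := wq N P
    invFun := fun q => ⟨⟨(q.1.1.1, q.1.2.1), by
      rcases q.2 with h | h
      · exact Or.inl (congrArg Subtype.val h)
      · exact Or.inr (congrArg Subtype.val h)⟩, by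
      by_cases hx : q.1.1.1 ∈ N.1
      · by_cases hy : q.1.2.1 ∈ P.1
        · refine Or.inl (Subtype.ext (Prod.ext ?_ ?_))
          · exact q.1.1.2.resolve_right (fun hc => hc hx)
          · exact q.1.2.2.resolve_right (fun hc => hc hy)
        · exact Or.inr (fun hc => hy hc.2)
      · exact Or.inr (fun hc => hx hc.1)⟩
    left_inv := fun p => by
      apply Subtype.ext
      apply Subtype.ext
      apply Prod.ext
      · dsimp only
        rw [wq_val_1]
        by_cases hx : p.1.1.1 ∈ N.1
        · rw [if_pos hx]
          rcases p.2 with h | h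
          · exact (congrArg (fun t => t.1.1) h).symm
          · by_cases hy : p.1.1.2 ∈ P.1
            · exact absurd ⟨hx, hy⟩ h
            · -- x ∈ N, y ∉ P forces x = C.zero by wedge condition
              rcases p.1.2 with h1 | h1
              · exact h1.symm
              · exact absurd (show p.1.1.2 ∈ P.1 by rw [h1]; exact P.2.1) hy
        · rw [if_neg hx]
      · dsimp only
        rw [wq_val_2]
        by_cases hy : p.1.1.2 ∈ P.1
        · rw [if_pos hy]
          rcases p.2 with h | h
          · exact (congrArg (fun t => t.1.2) h).symm
          · by_cases hx : p.1.1.1 ∈ N.1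
            · exact absurd ⟨hx, hy⟩ h
            · rcases p.1.2 with h1 | h1
              · exact absurd (show p.1.1.1 ∈ N.1 by rw [h1]; exact N.2.1) hx
              · exact h1.symm
        · rw [if_neg hy]
    right_inv := fun q => by
      apply Subtype.ext
      refine Prod.ext (Subtype.ext ?_) (Subtype.ext ?_)
      · rw [wq_val_1]
        dsimp only
        by_cases hx : q.1.1.1 ∈ N.1
        · rw [if_pos hx]
          exact (q.1.1.2.resolve_right (fun hc => hc hx)).symm
        · rw [if_neg hx]
      · rw [wq_val_2]
        dsimp only
        by_cases hy : q.1.2.1 ∈ P.1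
        · rw [if_pos hy]
          exact (q.1.2.2.resolve_right (fun hc => hc hy)).symm
        · rw [if_neg hy] }
  map_zero := wq_zero N P
  map_smul := wq_smul N P

end FModule

namespace FModule
variable {A : Type v} [MonoidWithZero A]

lemma coprodF_cls (f : IsoCl A → ℚ) (M N : FinFMod A) :
    coprodF f (clsOf M) (clsOf N) = f (clsOf (M.wedge N)) := by
  unfold coprodF
  rw [cls_wedge_out_left, cls_wedge_out_right]

lemma compat (f g : IsoCl A → ℚ) (c d : IsoCl A) :
    coprodF (hallMul f g) c d = hallMul₂ (coprodF f) (coprodF g) c d := by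
  show hallMul f g (clsOf ((Quotient.out c).wedge (Quotient.out d))) = _
  rw [hallMul_clsOf]
  haveI := (Quotient.out c).2
  haveI := (Quotient.out d).2
  haveI : Finite ((Quotient.out c).1.wedge (Quotient.out d).1).carrier :=
    ((Quotient.out c).wedge (Quotient.out d)).2
  haveI : Finite (Submods ((Quotient.out c).1.wedge (Quotient.out d).1)) :=
    inferInstanceAs (Finite {N : Set ((Quotient.out c).1.wedge (Quotient.out d).1).carrier //
      ((Quotient.out c).1.wedge (Quotient.out d).1).IsSubmod N})
  letI iW : Fintype (Submods ((Quotient.out c).1.wedge (Quotient.out d).1)) := Fintype.ofFinite _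
  letI : Fintype (Submods ((Quotient.out c).wedge (Quotient.out d)).1) := iW
  haveI : Fintype (Submods (Quotient.out c).1) := Fintype.ofFinite _
  haveI : Fintype (Submods (Quotient.out d).1) := Fintype.ofFinite _
  rw [hallSum_eq_sum]
  unfold hallMul₂
  simp only [finsum_eq_sum_of_fintype]
  rw [← Fintype.sum_prod_type']
  refine (Fintype.sum_equiv
    (wedgeSubmodEquiv (Quotient.out c).1 (Quotient.out d).1).symm _ _ ?_).symm
  intro q
  have h1 : coprodF f (clsOf ((Quotient.out c).quot q.1.1 q.1.2))
      (clsOf ((Quotient.out d).quot q.2.1 q.2.2)) =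
      f (clsOf (((Quotient.out c).quot q.1.1 q.1.2).wedge ((Quotient.out d).quot q.2.1 q.2.2))) :=
    coprodF_cls f _ _
  have h2 : coprodF g (clsOf ((Quotient.out c).sub q.1.1 q.1.2))
      (clsOf ((Quotient.out d).sub q.2.1 q.2.2)) =
      g (clsOf (((Quotient.out c).sub q.1.1 q.1.2).wedge ((Quotient.out d).sub q.2.1 q.2.2))) :=
    coprodF_cls g _ _
  rw [h1, h2]
  congr 1
  · exact congrArg f (cls_eq_of_iso (wedgeQuotIso q.1 q.2)).symm
  · exact congrArg g (cls_eq_of_iso (wedgeSubIso q.1 q.2)).symm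

end FModule

namespace FModule
variable {A : Type v} [MonoidWithZero A]

/-- chains of submodules S ⊆ B of M -/
def Chains (M : FModule A) :=
  {t : Set M.carrier × Set M.carrier // M.IsSubmod t.1 ∧ M.IsSubmod t.2 ∧ t.1 ⊆ t.2}

/-- the image of a submodule B ⊇ S in the quotient M/S -/
def quotImgSet (M : FModule A) (S : Set M.carrier) (hS : M.IsSubmod S)
    (B : Set M.carrier) : Set (M.quot S hS).carrier := {q | q.1 ∈ B}

open Classical in
lemma quotImgSet_submod (M : FModule A) (S : Set M.carrier) (hS : M.IsSubmod S)
    (B : Set M.carrier) (hB : M.IsSubmod B) :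
    (M.quot S hS).IsSubmod (quotImgSet M S hS B) := by
  constructor
  · exact hB.1
  · intro a q hq
    show ((M.quot S hS).smul a q).1 ∈ B
    rw [quot_smul_val]
    by_cases hm : M.smul a q.1 ∈ S
    · rw [if_pos hm]; exact hB.1
    · rw [if_neg hm]; exact hB.2 a q.1 hq

/-- the copy of a submodule S ⊆ B inside the submodule B -/
def restSet (M : FModule A) (B : Set M.carrier) (hB : M.IsSubmod B)
    (S : Set M.carrier) : Set (M.sub B hB).carrier := {z | z.1 ∈ S}

lemma restSet_submod (M : FModule A) (B : Set M.carrier) (hB : M.IsSubmod B)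
    (S : Set M.carrier) (hS : M.IsSubmod S) :
    (M.sub B hB).IsSubmod (restSet M B hB S) := by
  constructor
  · exact hS.1
  · intro a z hz
    exact hS.2 a z.1 hz

open Classical in
/-- underlying map of `isoA` -/
noncomputable def aFun (M : FModule A) (S B : Set M.carrier) (hS : M.IsSubmod S)
    (hB : M.IsSubmod B) (hSB : S ⊆ B)
    (r : ((M.quot S hS).quot (quotImgSet M S hS B) (quotImgSet_submod M S hS B hB)).carrier) :
    (M.quot B hB).carrier :=
  ⟨r.1.1, by
    rcases r.2 with h | h
    · exact Or.inl (by rw [h])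
    · exact Or.inr h⟩

lemma aFun_val (M : FModule A) (S B : Set M.carrier) (hS : M.IsSubmod S)
    (hB : M.IsSubmod B) (hSB : S ⊆ B) (r) :
    (aFun M S B hS hB hSB r).1 = r.1.1 := rfl

open Classical in
lemma aFun_smul (M : FModule A) (S B : Set M.carrier) (hS : M.IsSubmod S)
    (hB : M.IsSubmod B) (hSB : S ⊆ B) (a : A) (r) :
    aFun M S B hS hB hSB
        (((M.quot S hS).quot (quotImgSet M S hS B) (quotImgSet_submod M S hS B hB)).smul a r) =
      (M.quot B hB).smul a (aFun M S B hS hB hSB r) := by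
  apply Subtype.ext
  rw [aFun_val, quot_smul_val hB, aFun_val,
    quot_smul_val (quotImgSet_submod M S hS B hB), apply_ite Subtype.val,
    quot_smul_val hS]
  by_cases hmS : M.smul a r.1.1 ∈ S
  · rw [if_pos (show (M.quot S hS).smul a r.1 ∈ quotImgSet M S hS B by
      show ((M.quot S hS).smul a r.1).1 ∈ B
      rw [quot_smul_val hS, if_pos hmS]; exact hB.1)]
    rw [if_pos (hSB hmS)]
  · by_cases hmB : M.smul a r.1.1 ∈ B
    · rw [if_pos (show (M.quot S hS).smul a r.1 ∈ quotImgSet M S hS B by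
        show ((M.quot S hS).smul a r.1).1 ∈ B
        rw [quot_smul_val hS, if_neg hmS]; exact hmB)]
      rw [if_pos hmB]
    · rw [if_neg (show ¬((M.quot S hS).smul a r.1 ∈ quotImgSet M S hS B) by
        show ¬(((M.quot S hS).smul a r.1).1 ∈ B)
        rw [quot_smul_val hS, if_neg hmS]; exact hmB)]
      rw [if_neg hmB, if_neg hmS]

/-- third isomorphism: (M/S)/(B/S) ≅ M/B -/
noncomputable def isoA (M : FModule A) (S B : Set M.carrier) (hS : M.IsSubmod S)
    (hB : M.IsSubmod B) (hSB : S ⊆ B) :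
    Iso ((M.quot S hS).quot (quotImgSet M S hS B) (quotImgSet_submod M S hS B hB))
      (M.quot B hB) where
  toEquiv := {
    toFun := aFun M S B hS hB hSB
    invFun := fun y => ⟨⟨y.1, by
      rcases y.2 with h | h
      · exact Or.inl h
      · exact Or.inr (fun hc => h (hSB hc))⟩, by
      rcases y.2 with h | h
      · exact Or.inl (Subtype.ext h)
      · exact Or.inr h⟩
    left_inv := fun r => Subtype.ext (Subtype.ext rfl)
    right_inv := fun y => rfl }
  map_zero := rfl
  map_smul := aFun_smul M S B hS hB hSB

open Classical in
/-- underlying map of `isoB` -/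
noncomputable def bFun (M : FModule A) (S B : Set M.carrier) (hS : M.IsSubmod S)
    (hB : M.IsSubmod B) (hSB : S ⊆ B)
    (q : ((M.quot S hS).sub (quotImgSet M S hS B) (quotImgSet_submod M S hS B hB)).carrier) :
    ((M.sub B hB).quot (restSet M B hB S) (restSet_submod M B hB S hS)).carrier :=
  ⟨⟨q.1.1, q.2⟩, by
    rcases q.1.2 with h | h
    · exact Or.inl (Subtype.ext h)
    · exact Or.inr h⟩

lemma bFun_val (M : FModule A) (S B : Set M.carrier) (hS : M.IsSubmod S)
    (hB : M.IsSubmod B) (hSB : S ⊆ B) (q) :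
    (bFun M S B hS hB hSB q).1.1 = q.1.1 := rfl

open Classical in
lemma bFun_smul (M : FModule A) (S B : Set M.carrier) (hS : M.IsSubmod S)
    (hB : M.IsSubmod B) (hSB : S ⊆ B) (a : A) (q) :
    bFun M S B hS hB hSB
        (((M.quot S hS).sub (quotImgSet M S hS B) (quotImgSet_submod M S hS B hB)).smul a q) =
      ((M.sub B hB).quot (restSet M B hB S) (restSet_submod M B hB S hS)).smul a
        (bFun M S B hS hB hSB q) := by
  apply Subtype.ext
  apply Subtype.ext
  rw [bFun_val, quot_smul_val (restSet_submod M B hB S hS), apply_ite Subtype.val]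
  show ((M.quot S hS).smul a q.1).1 = _
  rw [quot_smul_val hS]
  by_cases hm : M.smul a q.1.1 ∈ S
  · rw [if_pos hm,
      if_pos (show (M.sub B hB).smul a (bFun M S B hS hB hSB q).1 ∈ restSet M B hB S from hm)]
  · rw [if_neg hm,
      if_neg (show ¬((M.sub B hB).smul a (bFun M S B hS hB hSB q).1 ∈ restSet M B hB S) from hm)]
    rfl

/-- second isomorphism: (B/S inside M/S) ≅ (B)/(S) -/
noncomputable def isoB (M : FModule A) (S B : Set M.carrier) (hS : M.IsSubmod S)
    (hB : M.IsSubmod B) (hSB : S ⊆ B) :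
    Iso ((M.quot S hS).sub (quotImgSet M S hS B) (quotImgSet_submod M S hS B hB))
      ((M.sub B hB).quot (restSet M B hB S) (restSet_submod M B hB S hS)) where
  toEquiv := {
    toFun := bFun M S B hS hB hSB
    invFun := fun z => ⟨⟨z.1.1, by
      rcases z.2 with h | h
      · exact Or.inl (congrArg Subtype.val h)
      · exact Or.inr h⟩, z.1.2⟩
    left_inv := fun q => Subtype.ext (Subtype.ext rfl)
    right_inv := fun z => Subtype.ext (Subtype.ext rfl) }
  map_zero := rfl
  map_smul := bFun_smul M S B hS hB hSB

/-- S ≅ copy of S inside B -/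
noncomputable def isoC (M : FModule A) (S B : Set M.carrier) (hS : M.IsSubmod S)
    (hB : M.IsSubmod B) (hSB : S ⊆ B) :
    Iso (M.sub S hS)
      ((M.sub B hB).sub (restSet M B hB S) (restSet_submod M B hB S hS)) where
  toEquiv := {
    toFun := fun x => ⟨⟨x.1, hSB x.2⟩, x.2⟩
    invFun := fun z => ⟨z.1.1, z.2⟩
    left_inv := fun x => rfl
    right_inv := fun z => rfl }
  map_zero := rfl
  map_smul a x := rfl

end FModule

namespace FModule
variable {A : Type v} [MonoidWithZero A]

instance quotCarrierFinite (M : FModule A) [Finite M.carrier] (S : Set M.carrier)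
    (hS : M.IsSubmod S) : Finite (M.quot S hS).carrier :=
  inferInstanceAs (Finite {x : M.carrier // x = M.zero ∨ x ∉ S})

instance subCarrierFinite (M : FModule A) [Finite M.carrier] (S : Set M.carrier)
    (hS : M.IsSubmod S) : Finite (M.sub S hS).carrier :=
  inferInstanceAs (Finite {x : M.carrier // x ∈ S})

noncomputable instance fintypeSubmodsFin (M : FinFMod A) : Fintype (Submods M.1) :=
  Fintype.ofFinite _

open Classical in
/-- the preimage in M of a submodule Q of M/S -/
def extSet (M : FModule A) (N : Submods M) (Q : Submods (M.quot N.1 N.2)) :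
    Set M.carrier :=
  {x | x ∈ N.1 ∨ ∃ h : x = M.zero ∨ x ∉ N.1, (⟨x, h⟩ : (M.quot N.1 N.2).carrier) ∈ Q.1}

lemma subset_extSet (M : FModule A) (N : Submods M) (Q : Submods (M.quot N.1 N.2)) :
    N.1 ⊆ extSet M N Q := fun _ hx => Or.inl hx

open Classical in
lemma extSet_submod (M : FModule A) (N : Submods M) (Q : Submods (M.quot N.1 N.2)) :
    M.IsSubmod (extSet M N Q) := by
  constructor
  · exact Or.inl N.2.1
  · intro a x hx
    rcases hx with hx | ⟨h, hQ⟩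
    · exact Or.inl (N.2.2 a x hx)
    · by_cases hm : M.smul a x ∈ N.1
      · exact Or.inl hm
      · refine Or.inr ⟨Or.inr hm, ?_⟩
        have h2 := Q.2.2 a _ hQ
        have he : (M.quot N.1 N.2).smul a ⟨x, h⟩ =
            (⟨M.smul a x, Or.inr hm⟩ : (M.quot N.1 N.2).carrier) := by
          apply Subtype.ext
          rw [quot_smul_val N.2, if_neg hm]
        rwa [he] at h2

/-- map sending a chain S ⊆ B to the pair (S, B/S ⊆ M/S) -/
def chainToL (M : FinFMod A) (c : Chains M.1) :
    Σ N : Submods M.1, Submods (FinFMod.quot M N.1 N.2).1 :=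
  ⟨⟨c.1.1, c.2.1⟩, ⟨quotImgSet M.1 c.1.1 c.2.1 c.1.2,
    quotImgSet_submod M.1 c.1.1 c.2.1 c.1.2 c.2.2.1⟩⟩

/-- map sending a chain S ⊆ B to the pair (B, S ⊆ B) -/
def chainToR (M : FinFMod A) (c : Chains M.1) :
    Σ P : Submods M.1, Submods (FinFMod.sub M P.1 P.2).1 :=
  ⟨⟨c.1.2, c.2.2.1⟩, ⟨restSet M.1 c.1.2 c.2.2.1 c.1.1,
    restSet_submod M.1 c.1.2 c.2.2.1 c.1.1 c.2.1⟩⟩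

lemma chainToL_bij (M : FinFMod A) : Function.Bijective (chainToL M) := by
  constructor
  · rintro ⟨⟨S, B⟩, hS, hB, hSB⟩ ⟨⟨S', B'⟩, hS', hB', hSB'⟩ hc
    have h1 : S = S' := congrArg (fun t => (t.1.1 : Set M.1.carrier)) hc
    subst h1
    have h2 : quotImgSet M.1 S hS B = quotImgSet M.1 S hS' B' :=
      congrArg Subtype.val (eq_of_heq (Sigma.mk.inj_iff.mp hc).2)
    apply Subtype.ext
    show (S, B) = (S, B')
    refine Prod.ext rfl ?_
    ext x
    constructor
    · intro hx
      by_cases hxS : x ∈ S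
      · exact hSB' hxS
      · have : (⟨x, Or.inr hxS⟩ : (M.1.quot S hS).carrier) ∈ quotImgSet M.1 S hS B := hx
        rw [h2] at this
        exact this
    · intro hx
      by_cases hxS : x ∈ S
      · exact hSB hxS
      · have : (⟨x, Or.inr hxS⟩ : (M.1.quot S hS').carrier) ∈ quotImgSet M.1 S hS' B' := hx
        rw [← h2] at this
        exact this
  · rintro ⟨N, Q⟩
    refine ⟨⟨(N.1, extSet M.1 N Q), N.2, extSet_submod M.1 N Q, subset_extSet M.1 N Q⟩, ?_⟩
    show (⟨N, _⟩ : Σ N : Submods M.1, Submods (FinFMod.quot M N.1 N.2).1) = ⟨N, Q⟩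
    refine congrArg (Sigma.mk N) (Subtype.ext ?_)
    ext q
    constructor
    · intro hq
      rcases (hq : q.1 ∈ extSet M.1 N Q) with hN | ⟨h, hQ⟩
      · have h0 : q.1 = M.1.zero := q.2.resolve_right (fun hc => hc hN)
        have : q = (M.1.quot N.1 N.2).zero := Subtype.ext h0
        rw [this]
        exact Q.2.1
      · exact hQ
    · intro hq
      exact Or.inr ⟨q.2, hq⟩

lemma chainToR_bij (M : FinFMod A) : Function.Bijective (chainToR M) := by
  constructor
  · rintro ⟨⟨S, B⟩, hS, hB, hSB⟩ ⟨⟨S', B'⟩, hS', hB', hSB'⟩ hc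
    have h1 : B = B' := congrArg (fun t => (t.1.1 : Set M.1.carrier)) hc
    subst h1
    have h2 : restSet M.1 B hB S = restSet M.1 B hB' S' :=
      congrArg Subtype.val (eq_of_heq (Sigma.mk.inj_iff.mp hc).2)
    apply Subtype.ext
    show (S, B) = (S', B)
    refine Prod.ext ?_ rfl
    ext x
    constructor
    · intro hx
      have : (⟨x, hSB hx⟩ : (M.1.sub B hB).carrier) ∈ restSet M.1 B hB S := hx
      rw [h2] at this
      exact this
    · intro hx
      have : (⟨x, hSB' hx⟩ : (M.1.sub B hB').carrier) ∈ restSet M.1 B hB' S' := hx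
      rw [← h2] at this
      exact this
  · rintro ⟨P, T⟩
    refine ⟨⟨({x | ∃ hx : x ∈ P.1, (⟨x, hx⟩ : (M.1.sub P.1 P.2).carrier) ∈ T.1}, P.1),
      ⟨?_, ?_⟩, P.2, fun x hx => hx.1⟩, ?_⟩
    · exact ⟨P.2.1, T.2.1⟩
    · intro a x hx
      obtain ⟨hxP, hxT⟩ := hx
      exact ⟨P.2.2 a x hxP, T.2.2 a _ hxT⟩
    · show (⟨P, _⟩ : Σ P : Submods M.1, Submods (FinFMod.sub M P.1 P.2).1) = ⟨P, T⟩
      refine congrArg (Sigma.mk P) (Subtype.ext ?_)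
      ext z
      constructor
      · intro hz
        obtain ⟨hxP, hxT⟩ := (hz : ∃ hx : z.1 ∈ P.1, _)
        exact hxT
      · intro hz
        exact ⟨z.2, hz⟩

lemma hallSum_assoc (f g h : IsoCl A → ℚ) (M : FinFMod A) :
    hallSum (hallMul f g) h M = hallSum f (hallMul g h) M := by
  haveI := M.2
  haveI : Finite (Chains M.1) :=
    inferInstanceAs (Finite {t : Set M.1.carrier × Set M.1.carrier // _})
  haveI : Fintype (Chains M.1) := Fintype.ofFinite _
  rw [hallSum_eq_sum, hallSum_eq_sum]
  have hL : ∀ N : Submods M.1,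
      hallMul f g (clsOf (M.quot N.1 N.2)) =
      ∑ Q : Submods (FinFMod.quot M N.1 N.2).1,
        f (clsOf ((FinFMod.quot M N.1 N.2).quot Q.1 Q.2)) *
        g (clsOf ((FinFMod.quot M N.1 N.2).sub Q.1 Q.2)) := fun N => by
    rw [hallMul_clsOf, hallSum_eq_sum]
  have hR : ∀ P : Submods M.1,
      hallMul g h (clsOf (M.sub P.1 P.2)) =
      ∑ T : Submods (FinFMod.sub M P.1 P.2).1,
        g (clsOf ((FinFMod.sub M P.1 P.2).quot T.1 T.2)) *
        h (clsOf ((FinFMod.sub M P.1 P.2).sub T.1 T.2)) := fun P => by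
    rw [hallMul_clsOf, hallSum_eq_sum]
  calc ∑ N : Submods M.1, hallMul f g (clsOf (M.quot N.1 N.2)) * h (clsOf (M.sub N.1 N.2))
      = ∑ N : Submods M.1, ∑ Q : Submods (FinFMod.quot M N.1 N.2).1,
          f (clsOf ((FinFMod.quot M N.1 N.2).quot Q.1 Q.2)) *
          g (clsOf ((FinFMod.quot M N.1 N.2).sub Q.1 Q.2)) *
          h (clsOf (M.sub N.1 N.2)) := by
        refine Finset.sum_congr rfl (fun N _ => ?_)
        rw [hL N, Finset.sum_mul]
    _ = ∑ p : Σ N : Submods M.1, Submods (FinFMod.quot M N.1 N.2).1,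
          f (clsOf ((FinFMod.quot M p.1.1 p.1.2).quot p.2.1 p.2.2)) *
          g (clsOf ((FinFMod.quot M p.1.1 p.1.2).sub p.2.1 p.2.2)) *
          h (clsOf (M.sub p.1.1 p.1.2)) := by
        rw [← Finset.univ_sigma_univ, Finset.sum_sigma]
    _ = ∑ c : Chains M.1,
          f (clsOf ((FinFMod.quot M (chainToL M c).1.1 (chainToL M c).1.2).quot
            (chainToL M c).2.1 (chainToL M c).2.2)) *
          g (clsOf ((FinFMod.quot M (chainToL M c).1.1 (chainToL M c).1.2).sub
            (chainToL M c).2.1 (chainToL M c).2.2)) *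
          h (clsOf (M.sub (chainToL M c).1.1 (chainToL M c).1.2)) :=
        (Fintype.sum_bijective (chainToL M) (chainToL_bij M) _ _ (fun c => rfl)).symm
    _ = ∑ c : Chains M.1,
          f (clsOf (M.quot (chainToR M c).1.1 (chainToR M c).1.2)) *
          (g (clsOf ((FinFMod.sub M (chainToR M c).1.1 (chainToR M c).1.2).quot
            (chainToR M c).2.1 (chainToR M c).2.2)) *
          h (clsOf ((FinFMod.sub M (chainToR M c).1.1 (chainToR M c).1.2).sub
            (chainToR M c).2.1 (chainToR M c).2.2))) := by
        refine Finset.sum_congr rfl (fun c _ => ?_)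
        obtain ⟨⟨S, B⟩, hS, hB, hSB⟩ := c
        dsimp only [chainToL, chainToR]
        have e1 : clsOf ((M.quot S hS).quot (quotImgSet M.1 S hS B)
              (quotImgSet_submod M.1 S hS B hB)) = clsOf (M.quot B hB) :=
          cls_eq_of_iso (isoA M.1 S B hS hB hSB)
        have e2 : clsOf ((M.quot S hS).sub (quotImgSet M.1 S hS B)
              (quotImgSet_submod M.1 S hS B hB)) =
            clsOf ((M.sub B hB).quot (restSet M.1 B hB S) (restSet_submod M.1 B hB S hS)) :=
          cls_eq_of_iso (isoB M.1 S B hS hB hSB)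
        have e3 : clsOf (M.sub S hS) =
            clsOf ((M.sub B hB).sub (restSet M.1 B hB S) (restSet_submod M.1 B hB S hS)) :=
          cls_eq_of_iso (isoC M.1 S B hS hB hSB)
        rw [e1, e2, e3]
        ring
    _ = ∑ p : Σ P : Submods M.1, Submods (FinFMod.sub M P.1 P.2).1,
          f (clsOf (M.quot p.1.1 p.1.2)) *
          (g (clsOf ((FinFMod.sub M p.1.1 p.1.2).quot p.2.1 p.2.2)) *
          h (clsOf ((FinFMod.sub M p.1.1 p.1.2).sub p.2.1 p.2.2))) :=
        Fintype.sum_bijective (chainToR M) (chainToR_bij M) _ _ (fun c => rfl)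
    _ = ∑ P : Submods M.1, ∑ T : Submods (FinFMod.sub M P.1 P.2).1,
          f (clsOf (M.quot P.1 P.2)) *
          (g (clsOf ((FinFMod.sub M P.1 P.2).quot T.1 T.2)) *
          h (clsOf ((FinFMod.sub M P.1 P.2).sub T.1 T.2))) := by
        rw [← Finset.univ_sigma_univ, Finset.sum_sigma]
    _ = ∑ P : Submods M.1, f (clsOf (M.quot P.1 P.2)) * hallMul g h (clsOf (M.sub P.1 P.2)) := by
        refine Finset.sum_congr rfl (fun P _ => ?_)
        rw [hR P, Finset.mul_sum]

lemma hall_assoc (f g h : IsoCl A → ℚ) :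
    hallMul (hallMul f g) h = hallMul f (hallMul g h) := by
  funext c
  rw [hallMul_eq, hallMul_eq]
  exact hallSum_assoc f g h (Quotient.out c)

end FModule

namespace FModule
variable {A : Type v} [MonoidWithZero A]

/-- an embedding of a finite module's carrier into `Fin (n+1)` -/
noncomputable def emb (M : FinFMod A) (n : ℕ) (h : Nat.card M.1.carrier ≤ n) :
    M.1.carrier ↪ Fin (n + 1) := by
  haveI := M.2
  haveI := Fintype.ofFinite M.1.carrier
  refine (Fintype.equivFin M.1.carrier).toEmbedding.trans (Fin.castLEEmb ?_)
  rw [← Nat.card_eq_fintype_card]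
  omega

open Classical in
/-- the code of a module: range of the embedding, image of zero, action of generators -/
noncomputable def code (S : Finset A) (M : FinFMod A) (n : ℕ) (h : Nat.card M.1.carrier ≤ n) :
    Set (Fin (n + 1)) × Fin (n + 1) × (↑S → Fin (n + 1) → Fin (n + 1)) :=
  letI : Nonempty M.1.carrier := ⟨M.1.zero⟩
  ⟨Set.range (emb M n h), emb M n h M.1.zero,
   fun s i => if hi : i ∈ Set.range (emb M n h)
     then emb M n h (M.1.smul s.1 (Function.invFun (emb M n h) i)) else i⟩

lemma code_inj (S : Finset A) (hS : Submonoid.closure (↑S : Set A) = ⊤)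
    (M₁ M₂ : FinFMod A) (n : ℕ) (h₁ : Nat.card M₁.1.carrier ≤ n)
    (h₂ : Nat.card M₂.1.carrier ≤ n)
    (hc : code S M₁ n h₁ = code S M₂ n h₂) : Nonempty (Iso M₁.1 M₂.1) := by
  classical
  letI : Nonempty M₁.1.carrier := ⟨M₁.1.zero⟩
  letI : Nonempty M₂.1.carrier := ⟨M₂.1.zero⟩
  set ι₁ := emb M₁ n h₁ with hι₁
  set ι₂ := emb M₂ n h₂ with hι₂
  have hrange : Set.range ι₁ = Set.range ι₂ := congrArg Prod.fst hc
  have hzero : ι₁ M₁.1.zero = ι₂ M₂.1.zero := congrArg (fun t => t.2.1) hc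
  have hact : ∀ (s : ↑S) (i : Fin (n + 1)),
      (if hi : i ∈ Set.range ι₁ then ι₁ (M₁.1.smul s.1 (Function.invFun ι₁ i)) else i) =
      (if hi : i ∈ Set.range ι₂ then ι₂ (M₂.1.smul s.1 (Function.invFun ι₂ i)) else i) :=
    fun s i => congrFun (congrFun (congrArg (fun t => t.2.2) hc) s) i
  have hli₁ : Function.LeftInverse (Function.invFun ι₁) ι₁ :=
    Function.leftInverse_invFun ι₁.injective
  have hli₂ : Function.LeftInverse (Function.invFun ι₂) ι₂ :=
    Function.leftInverse_invFun ι₂.injective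
  -- the underlying equivalence
  have hmem : ∀ x : M₁.1.carrier, (ι₁ x : Fin (n+1)) ∈ Set.range ι₂ := fun x =>
    hrange ▸ Set.mem_range_self x
  have hmem' : ∀ y : M₂.1.carrier, (ι₂ y : Fin (n+1)) ∈ Set.range ι₁ := fun y =>
    hrange.symm ▸ Set.mem_range_self y
  have hval₂ : ∀ x : M₁.1.carrier, ι₂ (Function.invFun ι₂ (ι₁ x)) = ι₁ x := fun x =>
    Function.invFun_eq (hmem x)
  have hval₁ : ∀ y : M₂.1.carrier, ι₁ (Function.invFun ι₁ (ι₂ y)) = ι₂ y := fun y =>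
    Function.invFun_eq (hmem' y)
  have key : ∀ a : A, ∀ x : M₁.1.carrier,
      ι₁ (M₁.1.smul a x) = ι₂ (M₂.1.smul a (Function.invFun ι₂ (ι₁ x))) := by
    intro a
    have ha : a ∈ Submonoid.closure (↑S : Set A) := by rw [hS]; exact Submonoid.mem_top a
    induction ha using Submonoid.closure_induction with
    | mem s hs =>
      intro x
      have := hact ⟨s, hs⟩ (ι₁ x)
      rw [dif_pos (Set.mem_range_self x), dif_pos (hmem x)] at this
      rw [hli₁ x] at this
      exact this
    | one =>
      intro x
      rw [M₁.1.one_smul, M₂.1.one_smul, hval₂ x]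
    | mul b c hb hc ihb ihc =>
      intro x
      rw [M₁.1.mul_smul, M₂.1.mul_smul]
      rw [ihb (M₁.1.smul c x), ihc x]
      exact congrArg ι₂ (congrArg (M₂.1.smul b) (hli₂ _))
  refine ⟨⟨⟨fun x => Function.invFun ι₂ (ι₁ x), fun y => Function.invFun ι₁ (ι₂ y),
    fun x => ?_, fun y => ?_⟩, ?_, ?_⟩⟩
  · show Function.invFun ι₁ (ι₂ (Function.invFun ι₂ (ι₁ x))) = x
    rw [hval₂ x, hli₁ x]
  · show Function.invFun ι₂ (ι₁ (Function.invFun ι₁ (ι₂ y))) = y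
    rw [hval₁ y, hli₂ y]
  · show Function.invFun ι₂ (ι₁ M₁.1.zero) = M₂.1.zero
    rw [hzero, hli₂]
  · intro a x
    show Function.invFun ι₂ (ι₁ (M₁.1.smul a x)) =
      M₂.1.smul a (Function.invFun ι₂ (ι₁ x))
    rw [key a x, hli₂]

open Classical in
lemma classes_finite [Monoid.FG A] (n : ℕ) :
    {c : IsoCl A | Nat.card (Quotient.out c).1.carrier ≤ n}.Finite := by
  obtain ⟨S, hS⟩ := Monoid.FG.fg_top (M := A)
  rw [← Set.finite_coe_iff]
  refine Finite.of_injective (fun c => code S (Quotient.out c.1) n c.2) ?_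
  intro c₁ c₂ hc
  obtain ⟨e⟩ := code_inj S hS _ _ n c₁.2 c₂.2 hc
  apply Subtype.ext
  rw [← Quotient.out_eq c₁.1, ← Quotient.out_eq c₂.1]
  exact Quotient.sound ⟨e⟩

lemma card_out_cls (M : FinFMod A) :
    Nat.card (Quotient.out (clsOf M)).1.carrier = Nat.card M.1.carrier :=
  Nat.card_congr (out_iso M).toEquiv

lemma finsupp_hallMul [Monoid.FG A] (f g : IsoCl A → ℚ) (hf : FinSupp f) (hg : FinSupp g) :
    FinSupp (hallMul f g) := by
  classical
  set B := (hf.toFinset.sup fun a => Nat.card (Quotient.out a).1.carrier) +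
    (hg.toFinset.sup fun b => Nat.card (Quotient.out b).1.carrier) with hB
  refine Set.Finite.subset (classes_finite B) ?_
  intro c hc
  have h : hallMul f g c ≠ 0 := hc
  rw [hallMul_eq] at h
  unfold hallSum at h
  have : ∃ N : Submods (Quotient.out c).1,
      f (clsOf ((Quotient.out c).quot N.1 N.2)) *
      g (clsOf ((Quotient.out c).sub N.1 N.2)) ≠ 0 := by
    by_contra hall
    push_neg at hall
    exact h (finsum_eq_zero_of_forall_eq_zero hall)
  obtain ⟨N, hN⟩ := this
  have hfa : f (clsOf ((Quotient.out c).quot N.1 N.2)) ≠ 0 := left_ne_zero_of_mul hN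
  have hgb : g (clsOf ((Quotient.out c).sub N.1 N.2)) ≠ 0 := right_ne_zero_of_mul hN
  have ha : clsOf ((Quotient.out c).quot N.1 N.2) ∈ hf.toFinset :=
    hf.mem_toFinset.mpr hfa
  have hb : clsOf ((Quotient.out c).sub N.1 N.2) ∈ hg.toFinset :=
    hg.mem_toFinset.mpr hgb
  have h1 := Finset.le_sup (f := fun a => Nat.card (Quotient.out a).1.carrier) ha
  have h2 := Finset.le_sup (f := fun b => Nat.card (Quotient.out b).1.carrier) hb
  rw [card_out_cls] at h1 h2
  rw [card_quot] at h1
  rw [card_sub] at h2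
  show Nat.card (Quotient.out c).1.carrier ≤ B
  have k1 := ncard_pos_of_submod (Quotient.out c) N.2
  have k2 := ncard_le_card (Quotient.out c) N.1
  have k3 := card_pos (Quotient.out c)
  omega

end FModule
open FModule in
/-- **The Hall algebra of a finitely generated monoid is a graded, connected,
co-commutative bialgebra.**  Here the Hall algebra is the space of finitely supported
`ℚ`-valued functions on isomorphism classes of finite `A`-modules with the convolution
product `(f ⋆ g)(M) = ∑_{N ⊆ M} f(M/N)g(N)`, the coproduct `Δ(f)(M,N) = f(M ⊕ N)`
(written in coordinates), the counit `ε(f) = f(0)`, and the grading by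
`dim M = |M| - 1`. -/
theorem hall_algebra_is_bialgebra (A : Type v) [MonoidWithZero A] [Monoid.FG A] :
    -- the convolution of finitely supported functions is finitely supported
    (∀ f g : IsoCl A → ℚ, FinSupp f → FinSupp g → FinSupp (hallMul f g)) ∧
    -- ⋆ is associative
    (∀ f g h : IsoCl A → ℚ, hallMul (hallMul f g) h = hallMul f (hallMul g h)) ∧
    -- the delta function of the zero module is a two-sided unit
    (∀ f : IsoCl A → ℚ,
      hallMul (deltaF (clsOf (FinFMod.zeroMod))) f = f ∧
      hallMul f (deltaF (clsOf (FinFMod.zeroMod))) = f) ∧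
    -- Δ is cocommutative
    (∀ (f : IsoCl A → ℚ) (c d : IsoCl A), coprodF f c d = coprodF f d c) ∧
    -- Δ is coassociative
    (∀ (f : IsoCl A → ℚ) (a b c : IsoCl A),
      coprodF (fun x => coprodF f x c) a b = coprodF (fun x => coprodF f a x) b c) ∧
    -- counit axioms for Δ
    (∀ (f : IsoCl A → ℚ) (c : IsoCl A),
      coprodF f (clsOf (FinFMod.zeroMod)) c = f c ∧
      coprodF f c (clsOf (FinFMod.zeroMod)) = f c) ∧
    -- Δ is multiplicative (bialgebra compatibility)
    (∀ (f g : IsoCl A → ℚ) (c d : IsoCl A),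
      coprodF (hallMul f g) c d = hallMul₂ (coprodF f) (coprodF g) c d) ∧
    -- the counit is multiplicative
    (∀ f g : IsoCl A → ℚ, counitF (hallMul f g) = counitF f * counitF g) ∧
    -- Δ of the unit
    (∀ c d : IsoCl A,
      coprodF (deltaF (clsOf (FinFMod.zeroMod))) c d =
        deltaF (clsOf (FinFMod.zeroMod)) c * deltaF (clsOf (FinFMod.zeroMod)) d) ∧
    -- the product is graded by dimension
    (∀ c d e : IsoCl A, hallMul (deltaF c) (deltaF d) e ≠ 0 →
      dimCl e = dimCl c + dimCl d) ∧
    -- the coproduct is graded by dimension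
    (∀ c d : IsoCl A,
      dimCl (clsOf ((Quotient.out c).wedge (Quotient.out d))) = dimCl c + dimCl d) ∧
    -- connectedness: the degree-zero part is spanned by the class of the zero module
    (∀ c : IsoCl A, dimCl c = 0 → c = clsOf (FinFMod.zeroMod)) := by
  refine ⟨?_, ?_, ?_, ?_, ?_, ?_, ?_, ?_, ?_, ?_, ?_, ?_⟩
  · exact fun f g hf hg => finsupp_hallMul f g hf hg
  · exact hall_assoc
  · exact fun f => ⟨hallMul_delta_left f, hallMul_delta_right f⟩
  · exact coprod_comm
  · exact coprod_assoc
  · exact coprod_counit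
  · exact compat
  · exact counit_mul
  · exact coprod_unit
  · exact grading_mul
  · exact grading_coprod
  · exact connected
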